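/- arXiv:2602.11789 — 2 statements merged into one kernel-verified Lean document; each statement's English description precedes it below -/
import Mathlib

section
/- Let m ≥ 1 and L > 0. Let f_1,…,f_m : ℝ^d → ℝ be differentiable with ‖∇f_i(x) − ∇f_i(y)‖ ≤ mL‖x − y‖ for all i and all x, y, and set f = (1/m)·Σ_{i=1}^m f_i. Fix points x_1,…,x_m ∈ ℝ^d and let x̄ = (1/m)·Σ_{i=1}^m x_i. Let {g_{ij} : i ∈ {1,…,m}, j ∈ {1,…,B_i}} be mutually independent square-integrable random vectors in ℝ^d with E[g_{ij}] = ∇f_i(x_i) and E[‖g_{ij} − ∇f_i(x_i)‖²] ≤ σ_i², and let ȳ = (1/m)·Σ_{i=1}^m (1/B_i)·Σ_{j=1}^{B_i} g_{ij}. Then E[‖ȳ − ∇f(x̄)‖²] ≤ (2/m²)·Σ_{i=1}^m σ_i²/B_i + 2mL²·Σ_{i=1}^m ‖x_i − x̄‖². -/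
open MeasureTheory ProbabilityTheory

section Aux

variable {Ω : Type*} [MeasurableSpace Ω] {P : Measure Ω}

lemma aux_integrable_inner {E : Type*} [NormedAddCommGroup E] [InnerProductSpace ℝ E]
    {f g : Ω → E} (hf : MemLp f 2 P) (hg : MemLp g 2 P) :
    Integrable (fun ω => (inner ℝ (f ω) (g ω) : ℝ)) P := by
  have h := L2.integrable_inner (𝕜 := ℝ) (hf.toLp f) (hg.toLp g)
  refine h.congr ?_
  filter_upwards [hf.coeFn_toLp, hg.coeFn_toLp] with ω h1 h2
  rw [h1, h2]

lemma aux_cov_zero {d : ℕ} [IsProbabilityMeasure P]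
    {X Y : Ω → EuclideanSpace ℝ (Fin d)}
    (hX : MemLp X 2 P) (hY : MemLp Y 2 P)
    (hXm : Measurable X) (hYm : Measurable Y) (h : IndepFun X Y P) :
    ∫ ω, (inner ℝ (X ω) (Y ω) : ℝ) ∂P = inner ℝ (∫ ω, X ω ∂P) (∫ ω, Y ω ∂P) := by
  have hXi : Integrable X P := hX.integrable (by norm_num)
  have hYi : Integrable Y P := hY.integrable (by norm_num)
  have hcoord : ∀ k : Fin d, ∫ ω, X ω k * Y ω k ∂P = (∫ ω, X ω ∂P) k * (∫ ω, Y ω ∂P) k := by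
    intro k
    have hφ : Measurable (fun v : EuclideanSpace ℝ (Fin d) => v k) :=
      (EuclideanSpace.proj (𝕜 := ℝ) k).continuous.measurable
    have hind : IndepFun (fun ω => X ω k) (fun ω => Y ω k) P := h.comp hφ hφ
    have h1 : ∫ ω, X ω k ∂P = (∫ ω, X ω ∂P) k := by
      have := (EuclideanSpace.proj (𝕜 := ℝ) k).integral_comp_comm hXi
      simpa using this
    have h2 : ∫ ω, Y ω k ∂P = (∫ ω, Y ω ∂P) k := by
      have := (EuclideanSpace.proj (𝕜 := ℝ) k).integral_comp_comm hYi
      simpa using this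
    rw [← h1, ← h2]
    exact hind.integral_fun_mul_eq_mul_integral (hφ.comp hXm).aestronglyMeasurable (hφ.comp hYm).aestronglyMeasurable
  have hXk : ∀ k : Fin d, MemLp (fun ω => X ω k) 2 P := by
    intro k
    simpa [Function.comp_def] using (EuclideanSpace.proj (𝕜 := ℝ) k).comp_memLp' hX
  have hYk : ∀ k : Fin d, MemLp (fun ω => Y ω k) 2 P := by
    intro k
    simpa [Function.comp_def] using (EuclideanSpace.proj (𝕜 := ℝ) k).comp_memLp' hY
  have hint : ∀ k : Fin d, Integrable (fun ω => X ω k * Y ω k) P := by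
    intro k
    have := aux_integrable_inner (hXk k) (hYk k)
    simpa [RCLike.inner_apply, mul_comm] using this
  calc ∫ ω, (inner ℝ (X ω) (Y ω) : ℝ) ∂P = ∫ ω, ∑ k, X ω k * Y ω k ∂P := by
        simp [PiLp.inner_apply, RCLike.inner_apply, mul_comm]
    _ = ∑ k, ∫ ω, X ω k * Y ω k ∂P := integral_finset_sum _ (fun k _ => hint k)
    _ = ∑ k, (∫ ω, X ω ∂P) k * (∫ ω, Y ω ∂P) k := by simp [hcoord]
    _ = inner ℝ (∫ ω, X ω ∂P) (∫ ω, Y ω ∂P) := by simp [PiLp.inner_apply, RCLike.inner_apply, mul_comm]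

lemma aux_norm_sq_sum {ι : Type*} [Fintype ι] {E : Type*} [NormedAddCommGroup E]
    [InnerProductSpace ℝ E] (Z : ι → Ω → E)
    (hZ : ∀ p, MemLp (Z p) 2 P)
    (hzero : ∀ p q, p ≠ q → ∫ ω, (inner ℝ (Z p ω) (Z q ω) : ℝ) ∂P = 0) :
    ∫ ω, ‖∑ p, Z p ω‖ ^ 2 ∂P = ∑ p, ∫ ω, ‖Z p ω‖ ^ 2 ∂P := by
  have h1 : ∀ ω, ‖∑ p, Z p ω‖ ^ 2 = ∑ p, ∑ q, (inner ℝ (Z p ω) (Z q ω) : ℝ) := by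
    intro ω
    rw [← real_inner_self_eq_norm_sq]
    simp only [inner_sum, sum_inner]
    rw [Finset.sum_comm]
  calc ∫ ω, ‖∑ p, Z p ω‖ ^ 2 ∂P
      = ∫ ω, ∑ p, ∑ q, (inner ℝ (Z p ω) (Z q ω) : ℝ) ∂P :=
        integral_congr_ae (Filter.Eventually.of_forall fun ω => h1 ω)
    _ = ∑ p, ∑ q, ∫ ω, (inner ℝ (Z p ω) (Z q ω) : ℝ) ∂P := by
        rw [integral_finset_sum _
          (fun p _ => integrable_finset_sum _ fun q _ => aux_integrable_inner (hZ p) (hZ q))]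
        exact Finset.sum_congr rfl fun p _ =>
          integral_finset_sum _ fun q _ => aux_integrable_inner (hZ p) (hZ q)
    _ = ∑ p, ∫ ω, (inner ℝ (Z p ω) (Z p ω) : ℝ) ∂P := by
        refine Finset.sum_congr rfl fun p _ => ?_
        rw [Finset.sum_eq_single p (fun q _ hq => hzero p q (Ne.symm hq)) (by simp)]
    _ = ∑ p, ∫ ω, ‖Z p ω‖ ^ 2 ∂P := by
        simp [real_inner_self_eq_norm_sq]

end Aux

set_option maxHeartbeats 1000000

/-- Gradient estimation error bound (equation (2.5) of the paper): the averaged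
node-specific mini-batch estimator `ȳ` deviates from `∇f(x̄)` by at most
`(2/m²) ∑ σ_i²/B_i + 2mL² ∑ ‖x_i − x̄‖²` in mean square. -/
theorem stmt7
    {Ω : Type*} [MeasurableSpace Ω] (P : Measure Ω) [IsProbabilityMeasure P]
    (d m : ℕ) (hm : 1 ≤ m) (L : ℝ)
    (f : Fin m → EuclideanSpace ℝ (Fin d) → ℝ)
    (hdiff : ∀ i, Differentiable ℝ (f i))
    (hLip : ∀ i x y, ‖gradient (f i) x - gradient (f i) y‖ ≤ (m : ℝ) * L * ‖x - y‖)
    (x : Fin m → EuclideanSpace ℝ (Fin d))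
    (B : Fin m → ℕ) (hB : ∀ i, 1 ≤ B i)
    (g : (i : Fin m) → Fin (B i) → Ω → EuclideanSpace ℝ (Fin d))
    (σ : Fin m → ℝ)
    (hmeas : ∀ i j, Measurable (g i j))
    (hL2 : ∀ i j, MemLp (g i j) 2 P)
    (hindep : ProbabilityTheory.iIndepFun
      (fun p : (Σ i : Fin m, Fin (B i)) => g p.1 p.2) P)
    (hmean : ∀ i j, ∫ ω, g i j ω ∂P = gradient (f i) (x i))
    (hvar : ∀ i j, ∫ ω, ‖g i j ω - gradient (f i) (x i)‖ ^ 2 ∂P ≤ (σ i) ^ 2) :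
    ∫ ω, ‖(1 / (m : ℝ)) • ∑ i, (1 / (B i : ℝ)) • ∑ j, g i j ω
        - gradient (fun z => (1 / (m : ℝ)) * ∑ i, f i z)
            ((1 / (m : ℝ)) • ∑ i, x i)‖ ^ 2 ∂P
      ≤ (2 / (m : ℝ) ^ 2) * ∑ i, (σ i) ^ 2 / (B i : ℝ)
        + 2 * (m : ℝ) * L ^ 2 * ∑ i, ‖x i - (1 / (m : ℝ)) • ∑ k, x k‖ ^ 2 := by
  classical
  have hm0 : (m : ℝ) ≠ 0 := Nat.cast_ne_zero.mpr (by omega)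
  have hB0 : ∀ i, (B i : ℝ) ≠ 0 := fun i => Nat.cast_ne_zero.mpr (by have := hB i; omega)
  set xbar : EuclideanSpace ℝ (Fin d) := (1 / (m : ℝ)) • ∑ k, x k with hxbar
  set G : EuclideanSpace ℝ (Fin d) :=
    gradient (fun z => (1 / (m : ℝ)) * ∑ i, f i z) xbar with hGdef
  -- gradient of the average
  have hG : G = (1 / (m : ℝ)) • ∑ i, gradient (f i) xbar := by
    have h1 : HasFDerivAt (fun z => ∑ i, f i z)
        (∑ i, (InnerProductSpace.toDual ℝ (EuclideanSpace ℝ (Fin d)))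
            (gradient (f i) xbar)) xbar :=
      HasFDerivAt.fun_sum fun i _ => ((hdiff i xbar).hasGradientAt).hasFDerivAt
    have h2 := h1.const_mul ((1 : ℝ) / m)
    have h3 : HasGradientAt (fun z => (1 / (m : ℝ)) * ∑ i, f i z)
        ((1 / (m : ℝ)) • ∑ i, gradient (f i) xbar) xbar := by
      rw [hasGradientAt_iff_hasFDerivAt, _root_.map_smul, map_sum]
      exact h2
    exact h3.gradient
  set μi : Fin m → EuclideanSpace ℝ (Fin d) := fun i => gradient (f i) (x i) with hμi
  set μ : EuclideanSpace ℝ (Fin d) := (1 / (m : ℝ)) • ∑ i, μi i with hμ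
  set c : (Σ i : Fin m, Fin (B i)) → ℝ := fun p => 1 / ((m : ℝ) * (B p.1 : ℝ)) with hc
  set Z : (Σ i : Fin m, Fin (B i)) → Ω → EuclideanSpace ℝ (Fin d) :=
    fun p ω => c p • (g p.1 p.2 ω - μi p.1) with hZ
  set W : Ω → EuclideanSpace ℝ (Fin d) := fun ω => ∑ p, Z p ω with hW
  -- decomposition identity
  have key : ∀ ω, (1 / (m : ℝ)) • ∑ i, (1 / (B i : ℝ)) • ∑ j, g i j ω - μ = W ω := by
    intro ω
    show _ = ∑ p : (Σ i : Fin m, Fin (B i)), Z p ω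
    rw [hμ, ← Finset.univ_sigma_univ, Finset.sum_sigma]
    rw [Finset.smul_sum, Finset.smul_sum, ← Finset.sum_sub_distrib]
    refine Finset.sum_congr rfl fun i _ => ?_
    simp only [hZ, hc, smul_sub, Finset.sum_sub_distrib, Finset.smul_sum, smul_smul]
    congr 1
    · refine Finset.sum_congr rfl fun j _ => ?_
      congr 1
      field_simp
    · rw [Finset.sum_const, Finset.card_univ, Fintype.card_fin, ← Nat.cast_smul_eq_nsmul ℝ, smul_smul]
      congr 1
      field_simp
      rw [div_self (hB0 i)]
  -- L² membership
  have hZmem : ∀ p, MemLp (Z p) 2 P :=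
    fun p => ((hL2 p.1 p.2).sub (memLp_const (μi p.1))).const_smul (c p)
  have hWmem : MemLp W 2 P := memLp_finset_sum _ fun p _ => hZmem p
  have hWsq : Integrable (fun ω => ‖W ω‖ ^ 2) P := hWmem.norm.integrable_sq
  -- zero covariance
  have hzero : ∀ p q, p ≠ q → ∫ ω, (inner ℝ (Z p ω) (Z q ω) : ℝ) ∂P = 0 := by
    intro p q hpq
    have hindpq : IndepFun (g p.1 p.2) (g q.1 q.2) P := hindep.indepFun hpq
    have hφp : Measurable (fun v : EuclideanSpace ℝ (Fin d) => v - μi p.1) :=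
      measurable_id.sub measurable_const
    have hφq : Measurable (fun v : EuclideanSpace ℝ (Fin d) => v - μi q.1) :=
      measurable_id.sub measurable_const
    have hind2 : IndepFun (fun ω => g p.1 p.2 ω - μi p.1)
        (fun ω => g q.1 q.2 ω - μi q.1) P := hindpq.comp hφp hφq
    have hmp : MemLp (fun ω => g p.1 p.2 ω - μi p.1) 2 P := (hL2 p.1 p.2).sub (memLp_const _)
    have hmq : MemLp (fun ω => g q.1 q.2 ω - μi q.1) 2 P := (hL2 q.1 q.2).sub (memLp_const _)
    have hmeanp : ∫ ω, (g p.1 p.2 ω - μi p.1) ∂P = 0 := by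
      rw [integral_sub ((hL2 p.1 p.2).integrable (by norm_num)) (integrable_const _)]
      simp [hmean p.1 p.2, hμi]
    have hcov := aux_cov_zero hmp hmq ((hmeas p.1 p.2).sub measurable_const)
      ((hmeas q.1 q.2).sub measurable_const) hind2
    have : ∫ ω, (inner ℝ (g p.1 p.2 ω - μi p.1) (g q.1 q.2 ω - μi q.1) : ℝ) ∂P = 0 := by
      rw [hcov, hmeanp]
      simp
    calc ∫ ω, (inner ℝ (Z p ω) (Z q ω) : ℝ) ∂P
        = ∫ ω, c p * c q * (inner ℝ (g p.1 p.2 ω - μi p.1) (g q.1 q.2 ω - μi q.1) : ℝ) ∂P := by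
          refine integral_congr_ae (Filter.Eventually.of_forall fun ω => ?_)
          simp only [hZ]
          rw [real_inner_smul_left, real_inner_smul_right]
          ring
      _ = c p * c q *
            ∫ ω, (inner ℝ (g p.1 p.2 ω - μi p.1) (g q.1 q.2 ω - μi q.1) : ℝ) ∂P :=
          integral_const_mul _ _
      _ = 0 := by rw [this]; ring
  -- variance bound
  have hvarW : ∫ ω, ‖W ω‖ ^ 2 ∂P ≤ (1 / (m : ℝ) ^ 2) * ∑ i, (σ i) ^ 2 / (B i : ℝ) := by
    rw [hW]
    rw [aux_norm_sq_sum Z hZmem hzero]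
    have hterm : ∀ p, ∫ ω, ‖Z p ω‖ ^ 2 ∂P ≤ (c p) ^ 2 * (σ p.1) ^ 2 := by
      intro p
      have h1 : ∀ ω, ‖Z p ω‖ ^ 2 = (c p) ^ 2 * ‖g p.1 p.2 ω - μi p.1‖ ^ 2 := by
        intro ω
        rw [hZ]
        simp only [norm_smul, mul_pow]
        rw [Real.norm_eq_abs, sq_abs]
      calc ∫ ω, ‖Z p ω‖ ^ 2 ∂P
          = (c p) ^ 2 * ∫ ω, ‖g p.1 p.2 ω - μi p.1‖ ^ 2 ∂P := by
            rw [← integral_const_mul]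
            exact integral_congr_ae (Filter.Eventually.of_forall fun ω => h1 ω)
        _ ≤ (c p) ^ 2 * (σ p.1) ^ 2 :=
            mul_le_mul_of_nonneg_left (hvar p.1 p.2) (sq_nonneg _)
    calc ∑ p, ∫ ω, ‖Z p ω‖ ^ 2 ∂P ≤ ∑ p : (Σ i : Fin m, Fin (B i)), (c p) ^ 2 * (σ p.1) ^ 2 :=
          Finset.sum_le_sum fun p _ => hterm p
      _ = (1 / (m : ℝ) ^ 2) * ∑ i, (σ i) ^ 2 / (B i : ℝ) := by
          rw [← Finset.univ_sigma_univ, Finset.sum_sigma, Finset.mul_sum]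
          refine Finset.sum_congr rfl fun i _ => ?_
          simp only [hc]
          rw [Finset.sum_const, Finset.card_univ, Fintype.card_fin, nsmul_eq_mul]
          field_simp [hB0 i]
  -- bias bound
  have hbias : ‖μ - G‖ ^ 2 ≤ (m : ℝ) * L ^ 2 * ∑ i, ‖x i - xbar‖ ^ 2 := by
    have hμG : μ - G = (1 / (m : ℝ)) • ∑ i, (μi i - gradient (f i) xbar) := by
      rw [hG, hμ, ← smul_sub, ← Finset.sum_sub_distrib]
    have hS : ∀ i, ‖μi i - gradient (f i) xbar‖ ≤ (m : ℝ) * L * ‖x i - xbar‖ :=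
      fun i => hLip i (x i) xbar
    have h1 : ‖μ - G‖ ≤ (1 / (m : ℝ)) * ∑ i, ((m : ℝ) * L * ‖x i - xbar‖) := by
      rw [hμG, norm_smul]
      have : ‖(1 / (m : ℝ))‖ = 1 / (m : ℝ) := by
        rw [Real.norm_eq_abs, abs_of_nonneg (by positivity)]
      rw [this]
      refine mul_le_mul_of_nonneg_left ?_ (by positivity)
      exact (norm_sum_le _ _).trans (Finset.sum_le_sum fun i _ => hS i)
    have hRnn : 0 ≤ (1 / (m : ℝ)) * ∑ i, ((m : ℝ) * L * ‖x i - xbar‖) :=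
      le_trans (norm_nonneg _) h1
    have h2 : ‖μ - G‖ ^ 2 ≤ ((1 / (m : ℝ)) * ∑ i, ((m : ℝ) * L * ‖x i - xbar‖)) ^ 2 :=
      pow_le_pow_left₀ (norm_nonneg _) h1 2
    have h3 : ((1 / (m : ℝ)) * ∑ i, ((m : ℝ) * L * ‖x i - xbar‖)) ^ 2
        = L ^ 2 * (∑ i, ‖x i - xbar‖) ^ 2 := by
      rw [← Finset.mul_sum, mul_pow, mul_pow]
      field_simp
    have h4 : (∑ i, ‖x i - xbar‖) ^ 2 ≤ (m : ℝ) * ∑ i, ‖x i - xbar‖ ^ 2 := by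
      have := sq_sum_le_card_mul_sum_sq (s := Finset.univ)
        (f := fun i => ‖x i - xbar‖)
      simpa using this
    calc ‖μ - G‖ ^ 2 ≤ L ^ 2 * (∑ i, ‖x i - xbar‖) ^ 2 := by rw [← h3]; exact h2
      _ ≤ L ^ 2 * ((m : ℝ) * ∑ i, ‖x i - xbar‖ ^ 2) :=
          mul_le_mul_of_nonneg_left h4 (sq_nonneg _)
      _ = (m : ℝ) * L ^ 2 * ∑ i, ‖x i - xbar‖ ^ 2 := by ring
  -- pointwise bound
  have hpt : ∀ ω, ‖(1 / (m : ℝ)) • ∑ i, (1 / (B i : ℝ)) • ∑ j, g i j ω - G‖ ^ 2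
      ≤ 2 * ‖W ω‖ ^ 2 + 2 * ‖μ - G‖ ^ 2 := by
    intro ω
    have hdec : (1 / (m : ℝ)) • ∑ i, (1 / (B i : ℝ)) • ∑ j, g i j ω - G
        = W ω + (μ - G) := by rw [← key ω]; abel
    rw [hdec]
    have htri := norm_add_le (W ω) (μ - G)
    nlinarith [norm_nonneg (W ω), norm_nonneg (μ - G), sq_nonneg (‖W ω‖ - ‖μ - G‖),
      norm_nonneg (W ω + (μ - G))]
  -- combining
  have hint : Integrable (fun ω => 2 * ‖W ω‖ ^ 2 + 2 * ‖μ - G‖ ^ 2) P :=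
    (hWsq.const_mul 2).add (integrable_const _)
  calc ∫ ω, ‖(1 / (m : ℝ)) • ∑ i, (1 / (B i : ℝ)) • ∑ j, g i j ω - G‖ ^ 2 ∂P
      ≤ ∫ ω, (2 * ‖W ω‖ ^ 2 + 2 * ‖μ - G‖ ^ 2) ∂P :=
        integral_mono_of_nonneg (Filter.Eventually.of_forall fun ω => sq_nonneg _)
          hint (Filter.Eventually.of_forall fun ω => hpt ω)
    _ = 2 * ∫ ω, ‖W ω‖ ^ 2 ∂P + 2 * ‖μ - G‖ ^ 2 := by
        rw [integral_add (hWsq.const_mul 2) (integrable_const _), integral_const_mul,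
          integral_const]
        simp
    _ ≤ 2 * ((1 / (m : ℝ) ^ 2) * ∑ i, (σ i) ^ 2 / (B i : ℝ))
        + 2 * ((m : ℝ) * L ^ 2 * ∑ i, ‖x i - xbar‖ ^ 2) := by
        gcongr
    _ = (2 / (m : ℝ) ^ 2) * ∑ i, (σ i) ^ 2 / (B i : ℝ)
        + 2 * (m : ℝ) * L ^ 2 * ∑ i, ‖x i - xbar‖ ^ 2 := by ring
end

section
/- Let m ≥ 1, L̄ > 0, and η > 0. Let f_1,…,f_m : ℝ^d → ℝ be differentiable with ‖∇f_i(x) − ∇f_i(y)‖ ≤ √m·L̄·‖x − y‖ for all i and all x, y, and assume f = (1/m)·Σ_{i=1}^m f_i satisfies ‖∇f(x) − ∇f(y)‖ ≤ L̄‖x − y‖ for all x, y. Fix x_1,…,x_m ∈ ℝ^d, y_1,…,y_m ∈ ℝ^d, and s_1,…,s_m ∈ ℝ^d with (1/m)·Σ_i s_i = (1/m)·Σ_i y_i. Let x̄ = (1/m)·Σ_i x_i, s̄ = (1/m)·Σ_i s_i, and x̄⁺ = x̄ − η·s̄. Define U = ‖(1/m)·Σ_{i=1}^m (y_i − ∇f_i(x_i))‖²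 and C = Σ_{i=1}^m ‖x_i − x̄‖² + η²·Σ_{i=1}^m ‖s_i − s̄‖². Then f(x̄⁺) ≤ f(x̄) − (η/2)‖∇f(x̄)‖² − (1/(2η) − L̄/2)‖x̄⁺ − x̄‖² + η·U + L̄²·η·C. -/
open RealInnerProductSpace

lemma descent_aux {E : Type*} [NormedAddCommGroup E] [InnerProductSpace ℝ E] [CompleteSpace E]
    (g : E → ℝ) (L : ℝ) (hL : 0 ≤ L) (hdiff : Differentiable ℝ g)
    (hLip : ∀ a b, ‖gradient g a - gradient g b‖ ≤ L * ‖a - b‖) (a b : E) :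
    g b ≤ g a + ⟪gradient g a, b - a⟫ + L / 2 * ‖b - a‖ ^ 2 := by
  set φ' : ℝ → ℝ := fun t => ⟪gradient g (a + t • (b - a)), b - a⟫ with hφ'
  have hgradcont : Continuous (fun z => gradient g z) := by
    refine (LipschitzWith.of_dist_le_mul (K := L.toNNReal) ?_).continuous
    intro u v
    rw [dist_eq_norm, dist_eq_norm, Real.coe_toNNReal _ hL]
    exact hLip u v
  have hderiv : ∀ t : ℝ, HasDerivAt (fun t => g (a + t • (b - a))) (φ' t) t := by
    intro t
    have h1 : HasDerivAt (fun t : ℝ => a + t • (b - a)) (b - a) t := by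
      simpa using ((hasDerivAt_id t).smul_const (b - a)).const_add a
    have h2 : HasFDerivAt g (InnerProductSpace.toDual ℝ E (gradient g (a + t • (b - a))))
        (a + t • (b - a)) := (hdiff _).hasGradientAt.hasFDerivAt
    simpa [hφ', InnerProductSpace.toDual_apply_apply, Function.comp_def] using h2.comp_hasDerivAt t h1
  have hcont : Continuous φ' := by
    apply Continuous.inner
    · exact hgradcont.comp (by continuity)
    · exact continuous_const
  have hint : g b - g a = ∫ t in (0:ℝ)..1, φ' t := by
    have := intervalIntegral.integral_eq_sub_of_hasDerivAt (f := fun t => g (a + t • (b - a)))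
      (f' := φ') (a := 0) (b := 1) (fun t _ => hderiv t) (hcont.intervalIntegrable 0 1)
    simpa using this.symm
  have hb1 : ∫ t in (0:ℝ)..1, (φ' t - ⟪gradient g a, b - a⟫) ≤
      ∫ t in (0:ℝ)..1, L * ‖b - a‖ ^ 2 * t := by
    apply intervalIntegral.integral_mono_on (by norm_num)
    · exact (hcont.sub continuous_const).intervalIntegrable 0 1
    · exact (continuous_const.mul continuous_id).intervalIntegrable 0 1
    · intro t ht
      rcases ht with ⟨ht0, ht1⟩
      have h1 : φ' t - ⟪gradient g a, b - a⟫
          = ⟪gradient g (a + t • (b - a)) - gradient g a, b - a⟫ := by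
        rw [inner_sub_left]
      rw [h1]
      calc ⟪gradient g (a + t • (b - a)) - gradient g a, b - a⟫
          ≤ ‖gradient g (a + t • (b - a)) - gradient g a‖ * ‖b - a‖ := real_inner_le_norm _ _
        _ ≤ (L * ‖(a + t • (b - a)) - a‖) * ‖b - a‖ := by
            gcongr; exact hLip _ _
        _ = L * ‖b - a‖ ^ 2 * t := by
            have : (a + t • (b - a)) - a = t • (b - a) := by abel
            rw [this, norm_smul, Real.norm_eq_abs, abs_of_nonneg ht0]; ring
  have hval : ∫ t in (0:ℝ)..1, L * ‖b - a‖ ^ 2 * t = L * ‖b - a‖ ^ 2 / 2 := by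
    rw [intervalIntegral.integral_const_mul, integral_id]; ring
  have hsub : ∫ t in (0:ℝ)..1, (φ' t - ⟪gradient g a, b - a⟫)
      = (∫ t in (0:ℝ)..1, φ' t) - ⟪gradient g a, b - a⟫ := by
    rw [intervalIntegral.integral_sub (hcont.intervalIntegrable 0 1)
      (intervalIntegrable_const)]
    simp
  rw [hval, hsub] at hb1
  linarith [hint ▸ hb1]

lemma grad_avg (d m : ℕ) (f : Fin m → EuclideanSpace ℝ (Fin d) → ℝ)
    (hdiff : ∀ i, Differentiable ℝ (f i)) (z : EuclideanSpace ℝ (Fin d)) :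
    gradient (fun z => (1 / (m : ℝ)) * ∑ i, f i z) z
      = (1 / (m : ℝ)) • ∑ i, gradient (f i) z := by
  have h : HasGradientAt (fun z => (1 / (m : ℝ)) * ∑ i, f i z)
      ((1 / (m : ℝ)) • ∑ i, gradient (f i) z) z := by
    rw [hasGradientAt_iff_hasFDerivAt]
    have h1 : HasFDerivAt (fun z => ∑ i, f i z)
        (∑ i, InnerProductSpace.toDual ℝ _ (gradient (f i) z)) z :=
      HasFDerivAt.fun_sum (fun i _ => ((hdiff i z).hasGradientAt.hasFDerivAt))
    have h2 := h1.const_mul (1 / (m : ℝ))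
    convert h2 using 1
    rfl
    simp [map_smul, map_sum, smul_comm]
  exact h.gradient

lemma jensen_norm {E : Type*} [SeminormedAddCommGroup E] [NormedSpace ℝ E] (m : ℕ) (hm : 1 ≤ m)
    (v : Fin m → E) : ‖(1/(m:ℝ)) • ∑ i, v i‖^2 ≤ (1/(m:ℝ)) * ∑ i, ‖v i‖^2 := by
  have hm0 : (0:ℝ) < m := by exact_mod_cast hm
  have h1 : ‖∑ i, v i‖ ≤ ∑ i, ‖v i‖ := norm_sum_le _ _
  have h2 : (∑ i, ‖v i‖)^2 ≤ (m:ℝ) * ∑ i, ‖v i‖^2 := by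
    have := sq_sum_le_card_mul_sum_sq (s := Finset.univ) (f := fun i => ‖v i‖)
    simpa using this
  have h3 : ‖(1/(m:ℝ)) • ∑ i, v i‖^2 = (1/(m:ℝ))^2 * ‖∑ i, v i‖^2 := by
    rw [norm_smul, mul_pow, Real.norm_eq_abs, sq_abs]
  rw [h3]
  have h4 : ‖∑ i, v i‖^2 ≤ (∑ i, ‖v i‖)^2 :=
    pow_le_pow_left₀ (norm_nonneg _) h1 2
  calc (1/(m:ℝ))^2 * ‖∑ i, v i‖^2 ≤ (1/(m:ℝ))^2 * ((m:ℝ) * ∑ i, ‖v i‖^2) := by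
        have := h4.trans h2
        gcongr
    _ = (1/(m:ℝ)) * ∑ i, ‖v i‖^2 := by field_simp

set_option maxHeartbeats 1000000 in
/-- Descent Lemma for the decentralized variance-reduced algorithm (Lemma E.1 of the
paper): with `U` the global gradient estimation error and `C` the consensus error,
`f(x̄⁺) ≤ f(x̄) − (η/2)‖∇f(x̄)‖² − (1/(2η) − L̄/2)‖x̄⁺ − x̄‖² + ηU + L̄²ηC`. -/
theorem stmt9 (d m : ℕ) (hm : 1 ≤ m) (Lbar η : ℝ) (hLbar : 0 < Lbar) (hη : 0 < η)
    (f : Fin m → EuclideanSpace ℝ (Fin d) → ℝ)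
    (hdiff : ∀ i, Differentiable ℝ (f i))
    (hLip : ∀ i x y, ‖gradient (f i) x - gradient (f i) y‖
        ≤ Real.sqrt m * Lbar * ‖x - y‖)
    (hLipf : ∀ x y, ‖gradient (fun z => (1 / (m : ℝ)) * ∑ i, f i z) x
          - gradient (fun z => (1 / (m : ℝ)) * ∑ i, f i z) y‖ ≤ Lbar * ‖x - y‖)
    (x y s : Fin m → EuclideanSpace ℝ (Fin d))
    (htrack : (1 / (m : ℝ)) • ∑ i, s i = (1 / (m : ℝ)) • ∑ i, y i) :
    (fun z => (1 / (m : ℝ)) * ∑ i, f i z)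
        ((1 / (m : ℝ)) • ∑ i, x i - η • ((1 / (m : ℝ)) • ∑ i, s i))
      ≤ (fun z => (1 / (m : ℝ)) * ∑ i, f i z) ((1 / (m : ℝ)) • ∑ i, x i)
        - (η / 2) * ‖gradient (fun z => (1 / (m : ℝ)) * ∑ i, f i z)
            ((1 / (m : ℝ)) • ∑ i, x i)‖ ^ 2
        - (1 / (2 * η) - Lbar / 2)
            * ‖((1 / (m : ℝ)) • ∑ i, x i - η • ((1 / (m : ℝ)) • ∑ i, s i))
                - (1 / (m : ℝ)) • ∑ i, x i‖ ^ 2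
        + η * ‖(1 / (m : ℝ)) • ∑ i, (y i - gradient (f i) (x i))‖ ^ 2
        + Lbar ^ 2 * η * (∑ i, ‖x i - (1 / (m : ℝ)) • ∑ k, x k‖ ^ 2
            + η ^ 2 * ∑ i, ‖s i - (1 / (m : ℝ)) • ∑ k, s k‖ ^ 2) := by
  set F : EuclideanSpace ℝ (Fin d) → ℝ := fun z => (1 / (m : ℝ)) * ∑ i, f i z with hF
  set xb : EuclideanSpace ℝ (Fin d) := (1 / (m : ℝ)) • ∑ i, x i with hxb
  set sb : EuclideanSpace ℝ (Fin d) := (1 / (m : ℝ)) • ∑ i, s i with hsb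
  have hFdiff : Differentiable ℝ F := by
    apply Differentiable.const_mul
    exact Differentiable.fun_sum (fun i _ => hdiff i)
  set g : EuclideanSpace ℝ (Fin d) := gradient F xb with hg
  -- descent lemma
  have hdesc := descent_aux F Lbar hLbar.le hFdiff hLipf xb (xb - η • sb)
  have hdiffpt : (xb - η • sb) - xb = -(η • sb) := by abel
  have hnorm2 : ‖(xb - η • sb) - xb‖ ^ 2 = η ^ 2 * ‖sb‖ ^ 2 := by
    rw [hdiffpt, norm_neg, norm_smul, mul_pow, Real.norm_eq_abs, sq_abs]
  have hinner : ⟪g, (xb - η • sb) - xb⟫ = -(η * ⟪g, sb⟫) := by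
    rw [hdiffpt, inner_neg_right, real_inner_smul_right]
  have hpolar : 2 * ⟪g, sb⟫ = ‖g‖ ^ 2 + ‖sb‖ ^ 2 - ‖g - sb‖ ^ 2 := by
    have h := norm_sub_sq_real g sb
    linarith [h]
  -- error decomposition
  set D : EuclideanSpace ℝ (Fin d) := (1 / (m : ℝ)) • ∑ i, (y i - gradient (f i) (x i)) with hD
  set A : EuclideanSpace ℝ (Fin d) :=
    (1 / (m : ℝ)) • ∑ i, (gradient (f i) xb - gradient (f i) (x i)) with hA
  have hgA : g - sb = A - D := by
    rw [hg, grad_avg d m f hdiff xb, htrack, hA, hD, ← smul_sub, ← smul_sub,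
      ← Finset.sum_sub_distrib, ← Finset.sum_sub_distrib]
    congr 1
    apply Finset.sum_congr rfl
    intro i _
    abel
  have hAbound : ‖A‖ ^ 2 ≤ Lbar ^ 2 * ∑ i, ‖x i - xb‖ ^ 2 := by
    have hj := jensen_norm (E := EuclideanSpace ℝ (Fin d)) m hm
      (fun i => gradient (f i) xb - gradient (f i) (x i))
    have hpt : ∀ i, ‖gradient (f i) xb - gradient (f i) (x i)‖ ^ 2
        ≤ (m : ℝ) * Lbar ^ 2 * ‖x i - xb‖ ^ 2 := by
      intro i
      have h1 := hLip i xb (x i)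
      have h2 : ‖xb - x i‖ = ‖x i - xb‖ := norm_sub_rev _ _
      rw [h2] at h1
      have h3 : (Real.sqrt m * Lbar * ‖x i - xb‖) ^ 2
          = (m : ℝ) * Lbar ^ 2 * ‖x i - xb‖ ^ 2 := by
        rw [mul_pow, mul_pow, Real.sq_sqrt (by positivity)]
      calc ‖gradient (f i) xb - gradient (f i) (x i)‖ ^ 2
          ≤ (Real.sqrt m * Lbar * ‖x i - xb‖) ^ 2 :=
            pow_le_pow_left₀ (norm_nonneg _) h1 2
        _ = _ := h3
    have hsum : ∑ i, ‖gradient (f i) xb - gradient (f i) (x i)‖ ^ 2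
        ≤ ∑ i, (m : ℝ) * Lbar ^ 2 * ‖x i - xb‖ ^ 2 :=
      Finset.sum_le_sum (fun i _ => hpt i)
    have hm0 : (0:ℝ) < m := by exact_mod_cast hm
    calc ‖A‖ ^ 2 ≤ (1/(m:ℝ)) * ∑ i, ‖gradient (f i) xb - gradient (f i) (x i)‖ ^ 2 := hj
      _ ≤ (1/(m:ℝ)) * ∑ i, (m : ℝ) * Lbar ^ 2 * ‖x i - xb‖ ^ 2 :=
          mul_le_mul_of_nonneg_left hsum (by positivity)
      _ = Lbar ^ 2 * ∑ i, ‖x i - xb‖ ^ 2 := by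
          rw [← Finset.mul_sum]
          field_simp
  clear_value F xb sb g D A
  have hsplit : ‖g - sb‖ ^ 2 ≤ 2 * ‖A‖ ^ 2 + 2 * ‖D‖ ^ 2 := by
    rw [hgA]
    have h1 : ‖A - D‖ ≤ ‖A‖ + ‖D‖ := norm_sub_le _ _
    nlinarith [norm_nonneg (A - D), norm_nonneg A, norm_nonneg D, sq_nonneg (‖A‖ - ‖D‖)]
  -- assemble
  have key : η / 2 * ‖g - sb‖ ^ 2 ≤ η * ‖D‖ ^ 2
      + Lbar ^ 2 * η * (∑ i, ‖x i - xb‖ ^ 2 + η ^ 2 * ∑ i, ‖s i - sb‖ ^ 2) := by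
    have k1 : η / 2 * ‖g - sb‖ ^ 2 ≤ η * ‖A‖ ^ 2 + η * ‖D‖ ^ 2 := by
      calc η / 2 * ‖g - sb‖ ^ 2 ≤ η / 2 * (2 * ‖A‖ ^ 2 + 2 * ‖D‖ ^ 2) :=
            mul_le_mul_of_nonneg_left hsplit (by positivity)
        _ = η * ‖A‖ ^ 2 + η * ‖D‖ ^ 2 := by ring
    have k2 : η * ‖A‖ ^ 2 ≤ Lbar ^ 2 * η * ∑ i, ‖x i - xb‖ ^ 2 := by
      calc η * ‖A‖ ^ 2 ≤ η * (Lbar ^ 2 * ∑ i, ‖x i - xb‖ ^ 2) :=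
            mul_le_mul_of_nonneg_left hAbound hη.le
        _ = Lbar ^ 2 * η * ∑ i, ‖x i - xb‖ ^ 2 := by ring
    have k3 : (0:ℝ) ≤ Lbar ^ 2 * η * (η ^ 2 * ∑ i, ‖s i - sb‖ ^ 2) :=
      mul_nonneg (mul_nonneg (sq_nonneg _) hη.le)
        (mul_nonneg (sq_nonneg _) (Finset.sum_nonneg fun i _ => sq_nonneg _))
    linarith [k1, k2, k3]
  rw [← hg, hinner, hnorm2] at hdesc
  have hip : η * ⟪g, sb⟫ = η/2 * ‖g‖ ^ 2 + η/2 * ‖sb‖ ^ 2 - η/2 * ‖g - sb‖ ^ 2 := by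
    linear_combination (η/2) * hpolar
  rw [hnorm2]
  have hgoalterm : (1 / (2 * η) - Lbar / 2) * (η ^ 2 * ‖sb‖ ^ 2)
      = η / 2 * ‖sb‖ ^ 2 - Lbar / 2 * (η ^ 2 * ‖sb‖ ^ 2) := by
    field_simp
  rw [hgoalterm]
  linarith [hdesc, key, hip]
end
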